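/- (Step in the proof of the factorization lemma.) Let n be a positive integer, let m ≤ n be a positive integer whose largest prime factor is at most n^{2/3}, write m = p₁p₂⋯p_r with primes p₁ ≥ p₂ ≥ ⋯ ≥ p_r, and let i be the smallest index with p₁p₂⋯p_i ≥ m^{1/3}. Then u = p₁⋯p_i and v = m/u satisfy u ≤ n^{2/3}, v ≤ n^{2/3}, and Ω(v) ≥ 2Ω(u) − 2. -/

import Mathlib

/-- Step in the proof of the factorization lemma: if `m ≤ n` has all prime factors at most
`n^{2/3}`, `m = p₁p₂⋯p_r` with primes `p₁ ≥ p₂ ≥ ⋯ ≥ p_r` (given as a list `L`), and `i` is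
the smallest index with `p₁⋯p_i ≥ m^{1/3}`, then `u = p₁⋯p_i` and `v = m / u` satisfy
`u ≤ n^{2/3}`, `v ≤ n^{2/3}` and `Ω(v) ≥ 2Ω(u) - 2`. -/
theorem factorization_lemma_step (n : ℕ) (hn : 0 < n) (m : ℕ) (hm : 0 < m) (hmn : m ≤ n)
    (L : List ℕ) (hprime : ∀ p ∈ L, Nat.Prime p) (hsorted : L.Pairwise (· ≥ ·))
    (hprod : L.prod = m) (hsmall : ∀ p ∈ L, (p : ℝ) ≤ (n : ℝ) ^ ((2 : ℝ) / 3))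
    (i : ℕ) (hi1 : 1 ≤ i) (hiL : i ≤ L.length)
    (hge : (m : ℝ) ^ ((1 : ℝ) / 3) ≤ ((L.take i).prod : ℝ))
    (hmin : ∀ j : ℕ, j < i → ((L.take j).prod : ℝ) < (m : ℝ) ^ ((1 : ℝ) / 3)) :
    ((L.take i).prod : ℝ) ≤ (n : ℝ) ^ ((2 : ℝ) / 3) ∧
    ((m / (L.take i).prod : ℕ) : ℝ) ≤ (n : ℝ) ^ ((2 : ℝ) / 3) ∧
    2 * ((L.take i).prod).primeFactorsList.length ≤
      (m / (L.take i).prod).primeFactorsList.length + 2 := by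
  have hip : i - 1 < L.length := by omega
  set p := L[i - 1]'hip with hpdef
  have hpmem : p ∈ L := List.getElem_mem hip
  have hpprime : Nat.Prime p := hprime p hpmem
  have hi11 : i - 1 + 1 = i := by omega
  have htake : L.take i = L.take (i - 1) ++ [p] := by
    rw [← hi11, List.take_succ, List.getElem?_eq_getElem hip]
    rfl
  have hdrop : L.drop (i - 1) = p :: L.drop i := by
    rw [List.drop_eq_getElem_cons hip, hi11]
  set w := (L.take (i - 1)).prod with hwdef
  have huwp : (L.take i).prod = w * p := by
    rw [htake, List.prod_append, List.prod_cons, List.prod_nil, mul_one]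
  have hLdecomp : L = L.take (i - 1) ++ (p :: L.drop i) := by
    rw [← hdrop, List.take_append_drop]
  have hsorted' : List.Pairwise (· ≥ ·) (L.take (i - 1) ++ (p :: L.drop i)) := by
    rw [← hLdecomp]; exact hsorted
  rw [List.pairwise_append] at hsorted'
  obtain ⟨-, hsort2, hcross⟩ := hsorted'
  rw [List.pairwise_cons] at hsort2
  obtain ⟨hple, -⟩ := hsort2
  -- positivity facts
  have hone : ∀ x ∈ L, 1 ≤ x := fun x hx => (hprime x hx).one_le
  have hupos : 0 < (L.take i).prod :=
    List.prod_pos fun x hx => (hprime x (List.mem_of_mem_take hx)).pos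
  have hvpos : 0 < (L.drop i).prod :=
    List.prod_pos fun x hx => (hprime x (List.mem_of_mem_drop hx)).pos
  have hwpos : 0 < w :=
    List.prod_pos fun x hx => (hprime x (List.mem_of_mem_take hx)).pos
  have hmR : (0 : ℝ) < (m : ℝ) := by exact_mod_cast hm
  have hwlt : (w : ℝ) < (m : ℝ) ^ ((1 : ℝ) / 3) := hmin (i - 1) (by omega)
  have h13 : (m : ℝ) ^ ((1 : ℝ) / 3) * (m : ℝ) ^ ((1 : ℝ) / 3) = (m : ℝ) ^ ((2 : ℝ) / 3) := by
    rw [← Real.rpow_add hmR]; norm_num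
  have h23 : (m : ℝ) ^ ((2 : ℝ) / 3) * (m : ℝ) ^ ((1 : ℝ) / 3) = (m : ℝ) := by
    rw [← Real.rpow_add hmR]; norm_num
  have hmn23 : (m : ℝ) ^ ((2 : ℝ) / 3) ≤ (n : ℝ) ^ ((2 : ℝ) / 3) :=
    Real.rpow_le_rpow (by positivity) (by exact_mod_cast hmn) (by norm_num)
  have h13pos : (0 : ℝ) < (m : ℝ) ^ ((1 : ℝ) / 3) := Real.rpow_pos_of_pos hmR _
  -- if i ≥ 2, then p ≤ w
  have hpw : 2 ≤ i → (p : ℝ) ≤ (w : ℝ) := by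
    intro hi2
    have hlen : 0 < (L.take (i - 1)).length := by
      rw [List.length_take]; omega
    set q := (L.take (i - 1))[0]'hlen with hqdef
    have hqmem : q ∈ L.take (i - 1) := List.getElem_mem hlen
    have hpq : p ≤ q := hcross q hqmem p List.mem_cons_self
    have hqw : q ≤ w :=
      List.single_le_prod (fun x hx => hone x (List.mem_of_mem_take hx)) q hqmem
    exact_mod_cast hpq.trans hqw
  -- first goal
  have goal1 : ((L.take i).prod : ℝ) ≤ (n : ℝ) ^ ((2 : ℝ) / 3) := by
    rcases eq_or_lt_of_le hi1 with hi1' | hi2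
    · have hw1 : w = 1 := by rw [hwdef, ← hi1']; simp
      have : (L.take i).prod = p := by rw [huwp, hw1, one_mul]
      rw [this]
      exact hsmall p hpmem
    · have hpw' := hpw hi2
      have hplt : (p : ℝ) < (m : ℝ) ^ ((1 : ℝ) / 3) := lt_of_le_of_lt hpw' hwlt
      have : ((L.take i).prod : ℝ) = (w : ℝ) * (p : ℝ) := by rw [huwp]; push_cast; ring
      rw [this]
      calc (w : ℝ) * (p : ℝ) ≤ (m : ℝ) ^ ((1 : ℝ) / 3) * (m : ℝ) ^ ((1 : ℝ) / 3) :=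
            mul_le_mul hwlt.le hplt.le (by positivity) (by positivity)
        _ = (m : ℝ) ^ ((2 : ℝ) / 3) := h13
        _ ≤ (n : ℝ) ^ ((2 : ℝ) / 3) := hmn23
  -- v = (L.drop i).prod
  have hm_eq : m = (L.take i).prod * (L.drop i).prod := by
    rw [List.prod_take_mul_prod_drop, hprod]
  have hv : m / (L.take i).prod = (L.drop i).prod := by
    rw [hm_eq]; exact Nat.mul_div_cancel_left _ hupos
  -- second goal
  have goal2 : ((m / (L.take i).prod : ℕ) : ℝ) ≤ (n : ℝ) ^ ((2 : ℝ) / 3) := by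
    rw [hv]
    have key : ((L.drop i).prod : ℝ) * (m : ℝ) ^ ((1 : ℝ) / 3) ≤
        (m : ℝ) ^ ((2 : ℝ) / 3) * (m : ℝ) ^ ((1 : ℝ) / 3) := by
      calc ((L.drop i).prod : ℝ) * (m : ℝ) ^ ((1 : ℝ) / 3)
          ≤ ((L.drop i).prod : ℝ) * ((L.take i).prod : ℝ) :=
            mul_le_mul_of_nonneg_left hge (by positivity)
        _ = (m : ℝ) := by rw [mul_comm]; exact_mod_cast hm_eq.symm
        _ = (m : ℝ) ^ ((2 : ℝ) / 3) * (m : ℝ) ^ ((1 : ℝ) / 3) := h23.symm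
    have := le_of_mul_le_mul_right key h13pos
    exact this.trans hmn23
  -- Ω counts
  have hΩu : ((L.take i).prod).primeFactorsList.length = i := by
    have hperm := Nat.primeFactorsList_unique (l := L.take i) rfl
      (fun q hq => hprime q (List.mem_of_mem_take hq))
    rw [← hperm.length_eq, List.length_take, min_eq_left hiL]
  have hΩv : ((L.drop i).prod).primeFactorsList.length = L.length - i := by
    have hperm := Nat.primeFactorsList_unique (l := L.drop i) rfl
      (fun q hq => hprime q (List.mem_of_mem_drop hq))
    rw [← hperm.length_eq, List.length_drop]
  have goal3 : 2 * ((L.take i).prod).primeFactorsList.length ≤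
      (m / (L.take i).prod).primeFactorsList.length + 2 := by
    rw [hv, hΩu, hΩv]
    rcases eq_or_lt_of_le hi1 with hi1' | hi2
    · omega
    · -- i ≥ 2 case
      have hwp : p ^ (i - 1) ≤ w := by
        have hlen : (L.take (i - 1)).length = i - 1 := by
          rw [List.length_take]; omega
        have := List.pow_card_le_prod (L.take (i - 1)) p
          (fun x hx => hcross x hx p List.mem_cons_self)
        rwa [hlen] at this
      have hvp : (L.drop i).prod ≤ p ^ (L.length - i) := by
        have hlen : (L.drop i).length = L.length - i := List.length_drop
        have := List.prod_le_pow_card (L.drop i) p (fun x hx => hple x hx)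
        rwa [hlen] at this
      -- real chain
      have hA : ((p : ℝ)) ^ (2 * (i - 1)) < (m : ℝ) ^ ((2 : ℝ) / 3) := by
        have h1 : ((p : ℝ)) ^ (i - 1) < (m : ℝ) ^ ((1 : ℝ) / 3) := by
          calc ((p : ℝ)) ^ (i - 1) ≤ (w : ℝ) := by exact_mod_cast hwp
            _ < (m : ℝ) ^ ((1 : ℝ) / 3) := hwlt
        have h2 : (((p : ℝ)) ^ (i - 1)) ^ 2 < ((m : ℝ) ^ ((1 : ℝ) / 3)) ^ 2 :=
          pow_lt_pow_left₀ h1 (by positivity) (by norm_num)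
        rw [← pow_mul, mul_comm (i - 1) 2] at h2
        rwa [sq, h13] at h2
      have hm_fact : (m : ℝ) = (w : ℝ) * ((p : ℝ) * ((L.drop i).prod : ℝ)) := by
        have : L.prod = w * (p * (L.drop i).prod) := by
          conv_lhs => rw [hLdecomp]
          rw [List.prod_append, List.prod_cons]
        rw [hprod] at this
        exact_mod_cast this
      have hB : (m : ℝ) ^ ((2 : ℝ) / 3) < (p : ℝ) * ((L.drop i).prod : ℝ) := by
        have hpvpos : (0 : ℝ) < (p : ℝ) * ((L.drop i).prod : ℝ) := by
          have : (0 : ℝ) < (p : ℝ) := by exact_mod_cast hpprime.pos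
          have h2 : (0 : ℝ) < ((L.drop i).prod : ℝ) := by exact_mod_cast hvpos
          positivity
        have key : (m : ℝ) ^ ((2 : ℝ) / 3) * (m : ℝ) ^ ((1 : ℝ) / 3) <
            ((p : ℝ) * ((L.drop i).prod : ℝ)) * (m : ℝ) ^ ((1 : ℝ) / 3) := by
          calc (m : ℝ) ^ ((2 : ℝ) / 3) * (m : ℝ) ^ ((1 : ℝ) / 3) = (m : ℝ) := h23
            _ = ((p : ℝ) * ((L.drop i).prod : ℝ)) * (w : ℝ) := by rw [hm_fact]; ring
            _ < ((p : ℝ) * ((L.drop i).prod : ℝ)) * (m : ℝ) ^ ((1 : ℝ) / 3) :=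
              mul_lt_mul_of_pos_left hwlt hpvpos
        exact lt_of_mul_lt_mul_right key h13pos.le
      have hC : (p : ℝ) * ((L.drop i).prod : ℝ) ≤ ((p : ℝ)) ^ (L.length - i + 1) := by
        have : ((L.drop i).prod : ℝ) ≤ ((p : ℝ)) ^ (L.length - i) := by exact_mod_cast hvp
        calc (p : ℝ) * ((L.drop i).prod : ℝ) ≤ (p : ℝ) * ((p : ℝ)) ^ (L.length - i) :=
              mul_le_mul_of_nonneg_left this (by positivity)
          _ = ((p : ℝ)) ^ (L.length - i + 1) := by ring
      have hfinal : ((p : ℝ)) ^ (2 * (i - 1)) < ((p : ℝ)) ^ (L.length - i + 1) :=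
        hA.trans (lt_of_lt_of_le hB hC)
      have hfinalN : p ^ (2 * (i - 1)) < p ^ (L.length - i + 1) := by exact_mod_cast hfinal
      have := (Nat.pow_lt_pow_iff_right hpprime.one_lt).mp hfinalN
      omega
  exact ⟨goal1, goal2, goal3⟩
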